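/- For every k ≥ 0, Σ_{n=k}^∞ A_{n,k+1} / 4^n = 2, where A_{n,k} = ((2k-1)/(2n+1)) binomial(2n+1, n+1-k). -/

import Mathlib

noncomputable def catalanTriangleA (n k : ℕ) : ℝ :=
  ((2 * k - 1 : ℝ)) / (2 * n + 1) * ((2 * n + 1).choose (n + 1 - k))

open Finset Filter Topology

lemma cb_sq_le (m : ℕ) : (2*m+1) * ((2*m).choose m)^2 ≤ 4^m * 4^m := by
  induction m with
  | zero => norm_num
  | succ m ih =>
    have h1 : (m+1) * (2*m+2).choose (m+1) = 2*(2*m+1) * ((2*m).choose m) := by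
      have := Nat.succ_mul_centralBinom_succ m
      simp only [Nat.centralBinom] at this
      convert this using 2 <;> ring
    set c := (2*m).choose m with hc
    set C := (2*m+2).choose (m+1) with hC
    have h2 : (m+1)^2 * C^2 = 4*(2*m+1)^2 * c^2 := by
      have h := congrArg (· ^ 2) h1
      simp only [mul_pow] at h
      nlinarith [h]
    have e1 : 2*(m+1) = 2*m+2 := by ring
    rw [e1]
    refine Nat.le_of_mul_le_mul_left ?_ (show 0 < (m+1)^2 by positivity)
    calc (m+1)^2 * ((2*m+2+1)*C^2) = (2*m+3)*((m+1)^2*C^2) := by ring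
      _ = (2*m+3)*(4*(2*m+1)^2*c^2) := by rw [h2]
      _ = (4*(2*m+1)*(2*m+3)) * ((2*m+1)*c^2) := by ring
      _ ≤ (4*(2*m+1)*(2*m+3)) * (4^m*4^m) := Nat.mul_le_mul le_rfl ih
      _ ≤ (16*(m+1)^2) * (4^m*4^m) := Nat.mul_le_mul (by nlinarith) le_rfl
      _ = (m+1)^2 * (4^(m+1)*4^(m+1)) := by ring

lemma cb_tendsto : Tendsto (fun m : ℕ => ((2*m).choose m : ℝ) / 4^m) atTop (𝓝 0) := by
  have ha0 : ∀ m : ℕ, 0 ≤ ((2*m).choose m : ℝ) / 4^m := fun m => by positivity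
  have hup : ∀ m : ℕ, ((2*m).choose m : ℝ) / 4^m ≤ Real.sqrt (1/(2*m+1)) := by
    intro m
    have h := cb_sq_le m
    have hc : ((2*m+1 : ℕ) : ℝ) * (((2*m).choose m : ℝ))^2 ≤ (4:ℝ)^m * 4^m := by
      exact_mod_cast h
    have hsq : (((2*m).choose m : ℝ) / 4^m)^2 ≤ 1/(2*m+1) := by
      rw [div_pow, div_le_div_iff₀ (by positivity) (by positivity)]
      push_cast at hc ⊢
      nlinarith [hc]
    calc ((2*m).choose m : ℝ) / 4^m
        = Real.sqrt ((((2*m).choose m : ℝ) / 4^m)^2) := (Real.sqrt_sq (ha0 m)).symm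
      _ ≤ Real.sqrt (1/(2*m+1)) := Real.sqrt_le_sqrt hsq
  have h1 : Tendsto (fun m : ℕ => (2*(m:ℝ)+1)) atTop atTop := by
    apply tendsto_atTop_add_const_right
    exact (tendsto_natCast_atTop_atTop (R := ℝ)).const_mul_atTop (by norm_num)
  have h2 : Tendsto (fun m : ℕ => 1/(2*(m:ℝ)+1)) atTop (𝓝 0) := by
    simpa [one_div, Pi.inv_def] using h1.inv_tendsto_atTop
  have h3 : Tendsto (fun m : ℕ => Real.sqrt (1/(2*(m:ℝ)+1))) atTop (𝓝 0) :=
    (Real.continuous_sqrt.tendsto' 0 0 (by simp)).comp h2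
  exact squeeze_zero ha0 hup h3

lemma half_sum (k : ℕ) : (2*k).choose k + 2 * ∑ i ∈ range k, (2*k).choose i = 4^k := by
  have h0 := Nat.sum_range_choose_halfway k
  have h1 : ∑ i ∈ range (k+1), (2*k+1).choose i
      = ∑ i ∈ range k, (2*k+1).choose (i+1) + (2*k+1).choose 0 :=
    Finset.sum_range_succ' _ k
  have h2 : ∀ i, (2*k+1).choose (i+1) = (2*k).choose i + (2*k).choose (i+1) :=
    fun i => Nat.choose_succ_succ' (2*k) i
  have h3 : ∑ i ∈ range k, (2*k+1).choose (i+1)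
      = ∑ i ∈ range k, (2*k).choose i + ∑ i ∈ range k, (2*k).choose (i+1) := by
    rw [← Finset.sum_add_distrib]; exact Finset.sum_congr rfl fun i _ => h2 i
  have h4 : ∑ i ∈ range k, (2*k).choose (i+1) + (2*k).choose 0
      = ∑ i ∈ range k, (2*k).choose i + (2*k).choose k := by
    have a := Finset.sum_range_succ' (fun i => (2*k).choose i) k
    have b := Finset.sum_range_succ (fun i => (2*k).choose i) k
    omega
  simp only [Nat.choose_zero_right] at *
  omega

noncomputable def NumCT (k n : ℕ) : ℝ :=
  2 * ((2*(n+k)).choose (n+k) : ℝ) + 4 * ∑ i ∈ range k, ((2*(n+k)).choose (n+i) : ℝ)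

lemma keyCT (k n : ℕ) :
    (2*(n+k)+1 : ℝ) * (4 * NumCT k n - NumCT k (n+1))
      = 4*(2*k+1) * (((2*(n+k)+1).choose n : ℝ)) := by
  set m := n + k with hm
  set e : ℕ → ℝ := fun i => ((2*m).choose (n+i) : ℝ) with he
  set f : ℕ → ℝ := fun i => ((2*m+1).choose (n+i) : ℝ) with hf
  set E : ℕ → ℝ := fun i => ((2*m+2).choose (n+1+i) : ℝ) with hE
  have hEf : ∀ i, E i = f i + f (i+1) := by
    intro i
    have h : (2*m+2).choose (n+1+i) = (2*m+1).choose (n+i) + (2*m+1).choose (n+i+1) := by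
      have := Nat.choose_succ_succ' (2*m+1) (n+i)
      convert this using 2 <;> omega
    simp only [he, hf, hE, h]
    push_cast
    rw [show n+i+1 = n+(i+1) by omega]
  have hfe : ∀ i, f (i+1) = e i + e (i+1) := by
    intro i
    have h : (2*m+1).choose (n+(i+1)) = (2*m).choose (n+i) + (2*m).choose (n+i+1) := by
      have := Nat.choose_succ_succ' (2*m) (n+i)
      convert this using 2 <;> omega
    simp only [he, hf, h]
    push_cast
    rw [show n+i+1 = n+(i+1) by omega]
  have hA : f k = e k + e (k+1) := by
    have h1 : (2*m+1).choose (n+k) = (2*m+1).choose (m+1) := by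
      rw [show n+k = m from rfl]
      exact (Nat.choose_symm_half m).symm
    have h2 : (2*m+1).choose (m+1) = (2*m).choose m + (2*m).choose (m+1) :=
      Nat.choose_succ_succ' (2*m) m
    have h3 : (2*m+1).choose m = (2*m).choose m + (2*m).choose (m+1) := by
      rw [← h2]; exact (Nat.choose_symm_half m).symm
    simp only [hf, he, h1, h2, h3, show n+k = m from rfl, show n+(k+1) = m+1 by omega]
    push_cast; ring
  have hB : (2*m+1 : ℝ) * e 0 = (n+2*k+1 : ℝ) * f 0 := by
    have h1 : (2*m+1) * (2*m).choose n = (2*m+1).choose (n+1) * (n+1) :=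
      Nat.add_one_mul_choose_eq (2*m) n
    have h2 : (2*m+1).choose (n+1) * (n+1) = (2*m+1).choose n * (2*m+1-n) :=
      Nat.choose_succ_right_eq (2*m+1) n
    have h3 : 2*m+1-n = n+2*k+1 := by omega
    rw [h3] at h2
    have h4 := congrArg (Nat.cast (R := ℝ)) (h1.trans h2)
    push_cast at h4
    simp only [he, hf, show n+0 = n by omega]
    linarith [h4]
  have hs1 : ∑ i ∈ range k, f (i+1) = ∑ i ∈ range k, f i + f k - f 0 := by
    have a := Finset.sum_range_succ' f k
    have b := Finset.sum_range_succ f k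
    have : ∑ i ∈ range k, f (i+1) + f 0 = ∑ i ∈ range k, f i + f k := by
      rw [← a, b]
    linarith
  have hs2 : ∑ i ∈ range k, e (i+1) = ∑ i ∈ range k, e i + e k - e 0 := by
    have a := Finset.sum_range_succ' e k
    have b := Finset.sum_range_succ e k
    have : ∑ i ∈ range k, e (i+1) + e 0 = ∑ i ∈ range k, e i + e k := by
      rw [← a, b]
    linarith
  have hSE : ∑ i ∈ range k, E i = ∑ i ∈ range k, f i + ∑ i ∈ range k, f (i+1) := by
    rw [← Finset.sum_add_distrib]; exact Finset.sum_congr rfl fun i _ => hEf i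
  have hSf : ∑ i ∈ range k, f (i+1) = ∑ i ∈ range k, e i + ∑ i ∈ range k, e (i+1) := by
    rw [← Finset.sum_add_distrib]; exact Finset.sum_congr rfl fun i _ => hfe i
  have hNum : NumCT k n = 2 * e k + 4 * ∑ i ∈ range k, e i := by
    simp only [NumCT, he, ← hm, show n+k = m from rfl]
  have hNum' : NumCT k (n+1) = 2 * E k + 4 * ∑ i ∈ range k, E i := by
    simp only [NumCT, hE]
    rw [show n+1+k = m+1 by omega, show 2*(m+1) = 2*m+2 by ring]
  have htgt : ((2*(n+k)+1).choose n : ℝ) = f 0 := by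
    simp only [hf, ← hm, show n+0 = n by omega]
  have hdiff : 4 * NumCT k n - NumCT k (n+1) = 8 * e 0 - 4 * f 0 := by
    rw [hNum, hNum', hEf k, hfe k]
    linarith [hs1, hs2, hSE, hSf, hA]
  rw [hdiff, htgt]
  have hmc : (m:ℝ) = (n:ℝ) + k := by rw [hm]; push_cast; ring
  push_cast at hB ⊢
  linear_combination (8:ℝ) * hB - 16 * e 0 * hmc

lemma teleCT (k n : ℕ) :
    catalanTriangleA (n+k) (k+1) / 4 ^ (n+k)
      = NumCT k n / 4^(n+k) - NumCT k (n+1) / 4^(n+1+k) := by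
  have hsub : (n+k) + 1 - (k+1) = n := by omega
  have hd : (2*((n+k):ℝ)+1) ≠ 0 := by positivity
  have hp : ((4:ℝ))^(n+k) ≠ 0 := by positivity
  have hkey := keyCT k n
  rw [catalanTriangleA, hsub]
  have hcast : ((2*(n+k)+1 : ℕ) : ℝ) = 2*((n+k):ℝ)+1 := by push_cast; ring
  have hpow : ((4:ℝ))^(n+1+k) = 4 * 4^(n+k) := by
    rw [show n+1+k = (n+k)+1 by omega, pow_succ]; ring
  rw [hpow]
  field_simp
  push_cast at hkey ⊢
  linear_combination (-1:ℝ) * hkey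

lemma numCT_zero (k : ℕ) : NumCT k 0 = 2 * 4^k := by
  have h := half_sum k
  have hc := congrArg (Nat.cast (R := ℝ)) h
  push_cast at hc
  simp only [NumCT, Nat.zero_add, zero_add]
  linarith [hc]

lemma numCT_nonneg (k n : ℕ) : 0 ≤ NumCT k n := by
  unfold NumCT
  positivity

lemma numCT_le (k n : ℕ) : NumCT k n ≤ (4*k+2) * ((2*(n+k)).choose (n+k) : ℝ) := by
  unfold NumCT
  have hterm : ∀ i ∈ range k, ((2*(n+k)).choose (n+i) : ℝ) ≤ ((2*(n+k)).choose (n+k) : ℝ) := by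
    intro i _
    have := Nat.choose_le_middle (n+i) (2*(n+k))
    rw [show 2*(n+k)/2 = n+k by omega] at this
    exact_mod_cast this
  have hsum : ∑ i ∈ range k, ((2*(n+k)).choose (n+i) : ℝ)
      ≤ k * ((2*(n+k)).choose (n+k) : ℝ) := by
    calc ∑ i ∈ range k, ((2*(n+k)).choose (n+i) : ℝ)
        ≤ ∑ i ∈ range k, ((2*(n+k)).choose (n+k) : ℝ) := Finset.sum_le_sum hterm
      _ = k * ((2*(n+k)).choose (n+k) : ℝ) := by
          rw [Finset.sum_const, card_range]; ring
  nlinarith [hsum]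

lemma gCT_tendsto (k : ℕ) :
    Tendsto (fun n : ℕ => NumCT k n / 4^(n+k)) atTop (𝓝 0) := by
  have h0 : ∀ n : ℕ, 0 ≤ NumCT k n / 4^(n+k) := fun n => by
    have := numCT_nonneg k n; positivity
  have hup : ∀ n : ℕ, NumCT k n / 4^(n+k)
      ≤ (4*k+2) * (((2*(n+k)).choose (n+k) : ℝ) / 4^(n+k)) := by
    intro n
    rw [mul_div_assoc'] at *
    apply div_le_div_of_nonneg_right ?_ (by positivity)
    · exact numCT_le k n
  have hcomp : Tendsto (fun n : ℕ => ((2*(n+k)).choose (n+k) : ℝ) / 4^(n+k)) atTop (𝓝 0) :=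
    cb_tendsto.comp (tendsto_add_atTop_nat k)
  have hmul : Tendsto (fun n : ℕ => (4*(k:ℝ)+2) * (((2*(n+k)).choose (n+k) : ℝ) / 4^(n+k)))
      atTop (𝓝 0) := by
    simpa using hcomp.const_mul (4*(k:ℝ)+2)
  exact squeeze_zero h0 hup hmul

theorem catalanTriangleA_column_sum (k : ℕ) :
    (∑' n : ℕ, catalanTriangleA (n + k) (k + 1) / 4 ^ (n + k)) = 2 := by
  set t : ℕ → ℝ := fun n => catalanTriangleA (n + k) (k + 1) / 4 ^ (n + k) with ht
  set g : ℕ → ℝ := fun n => NumCT k n / 4^(n+k) with hg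
  have htele : ∀ n, t n = g n - g (n+1) := by
    intro n
    simp only [ht, hg]
    exact teleCT k n
  have hpart : ∀ N, ∑ n ∈ range N, t n = g 0 - g N := by
    intro N
    calc ∑ n ∈ range N, t n = ∑ n ∈ range N, (g n - g (n+1)) :=
          Finset.sum_congr rfl fun n _ => htele n
      _ = g 0 - g N := Finset.sum_range_sub' g N
  have hg0 : g 0 = 2 := by
    simp only [hg, numCT_zero, Nat.zero_add, zero_add]
    field_simp
  have hgnn : ∀ N, 0 ≤ g N := fun N => by
    have := numCT_nonneg k N
    simp only [hg]; positivity
  have htnn : ∀ n, 0 ≤ t n := by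
    intro n
    simp only [ht, catalanTriangleA]
    have h : (2*(((k+1):ℕ)):ℝ) - 1 = 2*(k:ℝ)+1 := by push_cast; ring
    rw [h]
    positivity
  have hsummable : Summable t := by
    apply summable_of_sum_range_le htnn
    intro N
    rw [hpart]
    linarith [hgnn N, hg0.le]
  have h1 : Tendsto (fun N => ∑ n ∈ range N, t n) atTop (𝓝 (∑' n, t n)) :=
    hsummable.hasSum.tendsto_sum_nat
  have h2 : Tendsto (fun N => ∑ n ∈ range N, t n) atTop (𝓝 2) := by
    have : (fun N => ∑ n ∈ range N, t n) = fun N => g 0 - g N := funext hpart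
    rw [this, hg0]
    simpa using (tendsto_const_nhds (x := (2:ℝ)) (f := atTop)).sub (gCT_tendsto k)
  exact tendsto_nhds_unique h1 h2
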